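/- arXiv:1804.01980 — 7 statements merged into one kernel-verified Lean document; each statement's English description precedes it below -/
import Mathlib

section
/- Let α > 0 and let (M_n) be a countable collection of positive test supermartingales in an imprecise probability tree such that every process multiplier satisfies μM_n(s)(x) ≤ α for all situations s and states x. Then any countable convex combination M(s) := Σ_n λ_n M_n(s), with λ_n ≥ 0 summing to 1, is again a positive test supermartingale with μM(s)(x) ≤ α for all s, x. -/
open Filter

/-- prefix of length `n` of a path -/
def pref {X : Type*} (ω : ℕ → X) (n : ℕ) : List X := (List.range n).map ω

/-- process difference -/
def pdiff {X : Type*} (M : List X → ℝ) (s : List X) : X → ℝ := fun x => M (s ++ [x]) - M s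

/-- process multiplier -/
noncomputable def pmul {X : Type*} (M : List X → ℝ) (s : List X) : X → ℝ :=
  fun x => M (s ++ [x]) / M s

/-- family of coherent upper expectations (local models of an imprecise probability tree) -/
def Coherent {X : Type*} (Q : List X → (X → ℝ) → ℝ) : Prop :=
  ∀ s : List X,
    (∀ h : X → ℝ, Q s h ≤ ⨆ x, h x) ∧
    (∀ h g : X → ℝ, Q s (h + g) ≤ Q s h + Q s g) ∧
    (∀ (h : X → ℝ) (c : ℝ), 0 ≤ c → Q s (c • h) = c * Q s h)

/-- supermartingale for the tree with local models `Q` -/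
def IsSupermart {X : Type*} (Q : List X → (X → ℝ) → ℝ) (M : List X → ℝ) : Prop :=
  ∀ s : List X, Q s (pdiff M s) ≤ 0

/-- bounded below process -/
def BddBelowProc {X : Type*} (M : List X → ℝ) : Prop := ∃ C : ℝ, ∀ s : List X, C ≤ M s

/-- test supermartingale: nonnegative supermartingale with initial value 1 -/
def IsTestSupermart {X : Type*} (Q : List X → (X → ℝ) → ℝ) (M : List X → ℝ) : Prop :=
  IsSupermart Q M ∧ (∀ s : List X, 0 ≤ M s) ∧ M [] = 1

/-- game-theoretic upper expectation conditional on a situation `s` -/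
noncomputable def EV {X : Type*} (Q : List X → (X → ℝ) → ℝ) (f : (ℕ → X) → EReal)
    (s : List X) : EReal :=
  sInf { y : EReal | ∃ M : List X → ℝ, IsSupermart Q M ∧ BddBelowProc M ∧
    (∀ ω : ℕ → X, pref ω s.length = s →
      f ω ≤ Filter.liminf (fun n => ((M (pref ω n) : ℝ) : EReal)) Filter.atTop) ∧
    y = ((M s : ℝ) : EReal) }

set_option maxHeartbeats 1000000 in
theorem convex_combination_test_supermartingale {X : Type*} [Fintype X] [Nonempty X]
    (Q : List X → (X → ℝ) → ℝ) (hQ : Coherent Q) (α : ℝ) (hα : 0 < α)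
    (M : ℕ → List X → ℝ) (hM : ∀ n, IsTestSupermart Q (M n))
    (hMpos : ∀ n s, 0 < M n s)
    (hmul : ∀ n s x, pmul (M n) s x ≤ α)
    (l : ℕ → ℝ) (hl : ∀ n, 0 ≤ l n) (hls : Summable l) (hl1 : ∑' n, l n = 1) :
    (∀ s : List X, Summable (fun n => l n * M n s)) ∧
    IsTestSupermart Q (fun s => ∑' n, l n * M n s) ∧
    (∀ s : List X, 0 < ∑' n, l n * M n s) ∧
    (∀ (s : List X) (x : X), pmul (fun s => ∑' n, l n * M n s) s x ≤ α) := by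
  -- basic consequences
  have key : ∀ n (s : List X) (x : X), M n (s ++ [x]) ≤ α * M n s := by
    intro n s x
    have h := hmul n s x
    rw [pmul] at h
    exact (div_le_iff₀ (hMpos n s)).1 h
  have hb : ∀ n (s : List X), M n s ≤ α ^ s.length := by
    intro n s
    induction s using List.reverseRecOn with
    | nil => simp [(hM n).2.2]
    | append_singleton s x ih =>
      calc M n (s ++ [x]) ≤ α * M n s := key n s x
        _ ≤ α * α ^ s.length := mul_le_mul_of_nonneg_left ih hα.le
        _ = α ^ (s ++ [x]).length := by
            simp [pow_succ, mul_comm]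
  have hsum : ∀ s : List X, Summable (fun n => l n * M n s) := by
    intro s
    exact Summable.of_nonneg_of_le (fun n => mul_nonneg (hl n) (hMpos n s).le)
      (fun n => mul_le_mul_of_nonneg_left (hb n s) (hl n)) (hls.mul_right _)
  have hnn : ∀ s : List X, 0 ≤ ∑' n, l n * M n s := fun s =>
    tsum_nonneg (fun n => mul_nonneg (hl n) (hMpos n s).le)
  have hQ0 : ∀ s : List X, Q s 0 = 0 := by
    intro s
    have := (hQ s).2.2 0 0 le_rfl
    simpa using this
  -- positivity
  have hexpos : ∃ n, 0 < l n := by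
    by_contra h
    push_neg at h
    have hz : ∀ n, l n = 0 := fun n => le_antisymm (h n) (hl n)
    simp [hz] at hl1
  have hpos : ∀ s : List X, 0 < ∑' n, l n * M n s := by
    intro s
    obtain ⟨n, hn⟩ := hexpos
    exact Summable.tsum_pos (hsum s) (fun i => mul_nonneg (hl i) (hMpos i s).le) n
      (mul_pos hn (hMpos n s))
  -- supermartingale property
  have hsm : IsSupermart Q (fun s => ∑' n, l n * M n s) := by
    intro s
    set h : X → ℝ := pdiff (fun s => ∑' n, l n * M n s) s with hh
    have hfs : ∀ x : X, Summable (fun n => l n * pdiff (M n) s x) := by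
      intro x
      refine ((hsum (s ++ [x])).sub (hsum s)).congr (fun n => ?_)
      simp [pdiff, mul_sub]
    have hval : ∀ x, h x = ∑' n, l n * pdiff (M n) s x := by
      intro x
      have : h x = (∑' n, l n * M n (s ++ [x])) - ∑' n, l n * M n s := rfl
      rw [this, ← Summable.tsum_sub (hsum (s ++ [x])) (hsum s)]
      congr 1; funext n; simp [pdiff, mul_sub]
    set g : ℕ → X → ℝ := fun N x => ∑ n ∈ Finset.range N, l n * pdiff (M n) s x with hg
    have hgQ : ∀ N, Q s (g N) ≤ 0 := by
      intro N
      induction N with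
      | zero =>
        have : g 0 = 0 := by funext x; simp [hg]
        rw [this, hQ0 s]
      | succ N ih =>
        have hsplit : g (N + 1) = g N + (l N • pdiff (M N) s) := by
          funext x; simp [hg, Finset.sum_range_succ]
        rw [hsplit]
        have h1 := (hQ s).2.1 (g N) (l N • pdiff (M N) s)
        have h2 := (hQ s).2.2 (pdiff (M N) s) (l N) (hl N)
        have h3 : l N * Q s (pdiff (M N) s) ≤ 0 :=
          mul_nonpos_of_nonneg_of_nonpos (hl N) ((hM N).1 s)
        calc Q s (g N + l N • pdiff (M N) s) ≤ Q s (g N) + Q s (l N • pdiff (M N) s) := h1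
          _ = Q s (g N) + l N * Q s (pdiff (M N) s) := by rw [h2]
          _ ≤ 0 + 0 := add_le_add ih h3
          _ = 0 := by ring
    set C : ℝ := α ^ (s.length + 1) with hC
    have hterm : ∀ n x, l n * pdiff (M n) s x ≤ l n * C := by
      intro n x
      refine mul_le_mul_of_nonneg_left ?_ (hl n)
      have h1 : pdiff (M n) s x ≤ M n (s ++ [x]) := by
        have := ((hM n).2.1 s)
        simp [pdiff]; linarith
      have h2 : M n (s ++ [x]) ≤ α ^ (s ++ [x]).length := hb n (s ++ [x])
      have h3 : (s ++ [x]).length = s.length + 1 := by simp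
      rw [h3] at h2
      linarith
    have htail : ∀ N, Q s h ≤ (∑' i, l (i + N)) * C := by
      intro N
      have hdecomp : h = g N + (h - g N) := by
        funext x; simp only [Pi.add_apply, Pi.sub_apply]; ring
      have h1 : Q s h ≤ Q s (g N) + Q s (h - g N) := by
        calc Q s h = Q s (g N + (h - g N)) := by rw [← hdecomp]
          _ ≤ Q s (g N) + Q s (h - g N) := (hQ s).2.1 _ _
      have h2 : Q s (h - g N) ≤ ⨆ x, (h - g N) x := (hQ s).1 _
      have h3 : ∀ x, (h - g N) x ≤ (∑' i, l (i + N)) * C := by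
        intro x
        have hsplit := Summable.sum_add_tsum_nat_add (f := fun n => l n * pdiff (M n) s x) N (hfs x)
        have heq : (h - g N) x = ∑' i, l (i + N) * pdiff (M (i + N)) s x := by
          have : (h - g N) x = (∑' n, l n * pdiff (M n) s x)
              - ∑ n ∈ Finset.range N, l n * pdiff (M n) s x := by
            simp [hval x, hg]
          rw [this, ← hsplit]; ring
        rw [heq]
        calc (∑' i, l (i + N) * pdiff (M (i + N)) s x)
            ≤ ∑' i, l (i + N) * C := by
              refine Summable.tsum_le_tsum (fun i => hterm (i + N) x) ?_ ?_
              · exact (summable_nat_add_iff N).2 (hfs x)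
              · exact (summable_nat_add_iff N).2 (hls.mul_right C)
          _ = (∑' i, l (i + N)) * C := tsum_mul_right
      have h4 : (⨆ x, (h - g N) x) ≤ (∑' i, l (i + N)) * C := ciSup_le h3
      calc Q s h ≤ Q s (g N) + Q s (h - g N) := h1
        _ ≤ 0 + ((∑' i, l (i + N)) * C) := add_le_add (hgQ N) (le_trans h2 h4)
        _ = (∑' i, l (i + N)) * C := by ring
    have hlim : Tendsto (fun N => (∑' i, l (i + N)) * C) atTop (nhds 0) := by
      have := (tendsto_sum_nat_add l).mul_const C
      simpa using this
    exact ge_of_tendsto' hlim htail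
  refine ⟨hsum, ⟨hsm, fun s => hnn s, ?_⟩, hpos, ?_⟩
  · have : ∀ n, l n * M n [] = l n := by intro n; rw [(hM n).2.2, mul_one]
    show (∑' n, l n * M n []) = 1
    rw [tsum_congr this, hl1]
  · intro s x
    rw [pmul, div_le_iff₀ (hpos s)]
    calc (∑' n, l n * M n (s ++ [x])) ≤ ∑' n, α * (l n * M n s) := by
          refine Summable.tsum_le_tsum (fun n => ?_) (hsum (s ++ [x])) ((hsum s).mul_left α)
          calc l n * M n (s ++ [x]) ≤ l n * (α * M n s) :=
                mul_le_mul_of_nonneg_left (key n s x) (hl n)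
            _ = α * (l n * M n s) := by ring
      _ = α * ∑' n, l n * M n s := tsum_mul_left
end

section
/- For any supermartingale M in an imprecise probability tree and any situation s, M(s) ≥ inf over paths ω through s of limsup_n M(ω^n) ≥ inf over paths ω through s of liminf_n M(ω^n). -/
open Filter

section Aux
variable {X : Type*}

lemma exists_step [Fintype X] [Nonempty X]
    (Q : List X → (X → ℝ) → ℝ) (hQ : Coherent Q)
    (M : List X → ℝ) (hM : IsSupermart Q M) (s : List X) :
    ∃ x : X, M (s ++ [x]) ≤ M s := by
  obtain ⟨hsup, hadd, hsmul⟩ := hQ s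
  obtain ⟨x₀, -, hx₀⟩ := Finset.exists_min_image Finset.univ (pdiff M s)
    ⟨Classical.arbitrary X, Finset.mem_univ _⟩
  refine ⟨x₀, ?_⟩
  have h0 : Q s 0 = 0 := by
    have := hsmul 0 0 le_rfl
    simpa using this
  have hneg : Q s (-(pdiff M s)) ≤ - pdiff M s x₀ := by
    refine le_trans (hsup _) (ciSup_le fun x => ?_)
    simpa using hx₀ x (Finset.mem_univ x)
  have key : 0 ≤ Q s (pdiff M s) + (- pdiff M s x₀) := by
    have h1 : Q s (pdiff M s + (-(pdiff M s))) ≤ Q s (pdiff M s) + Q s (-(pdiff M s)) :=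
      hadd _ _
    have h2 : pdiff M s + (-(pdiff M s)) = 0 := by ring
    rw [h2, h0] at h1
    linarith
  have : pdiff M s x₀ ≤ 0 := by
    have := hM s
    linarith
  simpa [pdiff, sub_nonpos] using this

/-- greedy extension of a situation -/
def greedyExt (f : List X → X) (s : List X) : ℕ → List X
  | 0 => s
  | k+1 => greedyExt f s k ++ [f (greedyExt f s k)]

lemma greedyExt_length (f : List X → X) (s : List X) (k : ℕ) :
    (greedyExt f s k).length = s.length + k := by
  induction k with
  | zero => simp [greedyExt]
  | succ k ih => simp [greedyExt, ih]; omega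

lemma greedyExt_prefix (f : List X → X) (s : List X) {k l : ℕ} (h : k ≤ l) :
    greedyExt f s k <+: greedyExt f s l := by
  induction l with
  | zero => simpa using (Nat.le_zero.mp h) ▸ List.prefix_refl _
  | succ l ih =>
    rcases Nat.lt_or_ge k (l+1) with h' | h'
    · exact (ih (Nat.lt_succ_iff.mp h')).trans ⟨[f (greedyExt f s l)], rfl⟩
    · have : k = l + 1 := le_antisymm h h'
      subst this; exact List.prefix_refl _

lemma getD_of_prefix {l₁ l₂ : List X} (h : l₁ <+: l₂) {n : ℕ} (hn : n < l₁.length)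
    (d : X) : l₂.getD n d = l₁.getD n d := by
  obtain ⟨t, rfl⟩ := h
  simp [List.getD_eq_getElem?_getD, List.getElem?_append_left hn]

end Aux

theorem supermartingale_inf_limsup {X : Type*} [Fintype X] [Nonempty X]
    (Q : List X → (X → ℝ) → ℝ) (hQ : Coherent Q)
    (M : List X → ℝ) (hM : IsSupermart Q M) (s : List X) :
    (⨅ ω : {ω : ℕ → X // pref ω s.length = s},
        Filter.limsup (fun n => ((M (pref ω.1 n) : ℝ) : EReal)) Filter.atTop) ≤ (M s : EReal) ∧
    (⨅ ω : {ω : ℕ → X // pref ω s.length = s},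
        Filter.liminf (fun n => ((M (pref ω.1 n) : ℝ) : EReal)) Filter.atTop) ≤
      ⨅ ω : {ω : ℕ → X // pref ω s.length = s},
        Filter.limsup (fun n => ((M (pref ω.1 n) : ℝ) : EReal)) Filter.atTop := by
  classical
  have hstep : ∀ t : List X, ∃ x : X, M (t ++ [x]) ≤ M t := fun t => exists_step Q hQ M hM t
  choose f hf using hstep
  set d : X := Classical.arbitrary X with hd
  set ω : ℕ → X := fun n => (greedyExt f s (n+1)).getD n d with hω
  have hωval : ∀ n m : ℕ, n < s.length + m → ω n = (greedyExt f s m).getD n d := by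
    intro n m hn
    rcases Nat.le_total (n+1) m with h | h
    · exact (getD_of_prefix (greedyExt_prefix f s h)
        (by rw [greedyExt_length]; omega) d).symm
    · exact (getD_of_prefix (greedyExt_prefix f s h)
        (by rw [greedyExt_length]; omega) d)
  have hpref : ∀ k : ℕ, pref ω (s.length + k) = greedyExt f s k := by
    intro k
    apply List.ext_getElem
    · simp [pref, greedyExt_length]
    · intro i h1 h2
      have hi : i < s.length + k := by simpa [pref] using h1
      have : (pref ω (s.length + k))[i] = ω i := by
        simp [pref]
      rw [this, hωval i k hi]
      rw [List.getD_eq_getElem?_getD, List.getElem?_eq_getElem h2]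
      rfl
  have hprefs : pref ω s.length = s := by
    have := hpref 0
    simpa [greedyExt] using this
  have hMle : ∀ k : ℕ, M (greedyExt f s k) ≤ M s := by
    intro k
    induction k with
    | zero => exact le_rfl
    | succ k ih => exact le_trans (hf (greedyExt f s k)) ih
  have hlimsup : Filter.limsup (fun n => ((M (pref ω n) : ℝ) : EReal)) Filter.atTop
      ≤ (M s : EReal) := by
    apply Filter.limsup_le_of_le (by isBoundedDefault)
    filter_upwards [Filter.eventually_ge_atTop s.length] with n hn
    have : pref ω n = greedyExt f s (n - s.length) := by
      have := hpref (n - s.length)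
      rwa [Nat.add_sub_cancel' hn] at this
    rw [this]
    exact_mod_cast hMle (n - s.length)
  constructor
  · exact iInf_le_of_le ⟨ω, hprefs⟩ hlimsup
  · exact iInf_mono fun ω' => Filter.liminf_le_limsup
end

section
/- In an imprecise probability tree, if the game-theoretic upper expectation of an extended real variable f conditional on a situation s is finite (E_V(f|s) < +∞), then E_V(f|t) < +∞ for every situation t following s. -/
open Filter

theorem EV_finite_of_prefix {X : Type*} [Fintype X] [Nonempty X]
    (Q : List X → (X → ℝ) → ℝ) (hQ : Coherent Q)
    (f : (ℕ → X) → EReal) (s : List X) (hfin : EV Q f s < ⊤)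
    (t : List X) (hst : s <+: t) :
    EV Q f t < ⊤ := by
  have hne : { y : EReal | ∃ M : List X → ℝ, IsSupermart Q M ∧ BddBelowProc M ∧
      (∀ ω : ℕ → X, pref ω s.length = s →
        f ω ≤ Filter.liminf (fun n => ((M (pref ω n) : ℝ) : EReal)) Filter.atTop) ∧
      y = ((M s : ℝ) : EReal) }.Nonempty := by
    by_contra h
    rw [Set.not_nonempty_iff_eq_empty] at h
    rw [EV, h, sInf_empty] at hfin
    exact lt_irrefl _ hfin
  obtain ⟨y, M, hM, hbb, hdom, hy⟩ := hne
  have hpref : ∀ ω : ℕ → X, pref ω t.length = t → pref ω s.length = s := by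
    intro ω hω
    have hle : s.length ≤ t.length := hst.length_le
    have h1 : (pref ω t.length).take s.length = pref ω s.length := by
      simp only [pref, ← List.map_take, List.take_range, Nat.min_eq_left hle]
    rw [hω] at h1
    rw [← h1]
    exact (List.prefix_iff_eq_take.mp hst).symm
  have hmem : ((M t : ℝ) : EReal) ∈ { y : EReal | ∃ M : List X → ℝ, IsSupermart Q M ∧ BddBelowProc M ∧
      (∀ ω : ℕ → X, pref ω t.length = t →
        f ω ≤ Filter.liminf (fun n => ((M (pref ω n) : ℝ) : EReal)) Filter.atTop) ∧
      y = ((M t : ℝ) : EReal) } :=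
    ⟨M, hM, hbb, fun ω hω => hdom ω (hpref ω hω), rfl⟩
  calc EV Q f t ≤ ((M t : ℝ) : EReal) := sInf_le hmem
    _ < ⊤ := by exact_mod_cast EReal.coe_lt_top _
end

section
/- In an imprecise probability tree, for any extended real variable f, the unconditional game-theoretic upper expectation satisfies E_V(f) = inf{ M(□) : M a bounded-below supermartingale such that liminf M ≥ f strictly almost surely }, where 'liminf M ≥ f strictly almost surely' means there exists a test supermartingale converging to +∞ on the set of paths ω where liminf_n M(ω^n) < f(ω). -/
open Filter

/-- the constant process `1` is a test supermartingale -/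
lemma one_testSupermart {X : Type*} (Q : List X → (X → ℝ) → ℝ) (hQ : Coherent Q) :
    IsTestSupermart Q (fun _ => (1 : ℝ)) := by
  refine ⟨fun s => ?_, fun _ => zero_le_one, rfl⟩
  have h0 : pdiff (fun _ : List X => (1 : ℝ)) s = (0 : ℝ) • (fun _ : X => (0:ℝ)) := by
    funext x; simp [pdiff]
  rw [h0, (hQ s).2.2 _ 0 le_rfl, zero_mul]

lemma ereal_le_of_forall_add {a : ℝ} {x : EReal}
    (h : ∀ ε : ℝ, 0 < ε → x ≤ ((a + ε : ℝ) : EReal)) : x ≤ (a : EReal) := by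
  by_contra hc
  push_neg at hc
  obtain ⟨c, hac, hcx⟩ := exists_between hc
  have hcbot : c ≠ ⊥ := by
    intro h'; rw [h'] at hac; exact (EReal.bot_lt_coe a).not_gt hac
  have hctop : c ≠ ⊤ := (hcx.trans_le le_top).ne
  lift c to ℝ using ⟨hctop, hcbot⟩
  have hε : (0:ℝ) < c - a := by
    have := EReal.coe_lt_coe_iff.mp hac; linarith
  have := h (c - a) hε
  rw [show a + (c - a) = c by ring] at this
  exact absurd (this.trans_lt hcx) (lt_irrefl x)

theorem EV_eq_sas_inf {X : Type*} [Fintype X] [Nonempty X]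
    (Q : List X → (X → ℝ) → ℝ) (hQ : Coherent Q)
    (f : (ℕ → X) → EReal) :
    EV Q f [] = sInf { y : EReal | ∃ M : List X → ℝ, IsSupermart Q M ∧ BddBelowProc M ∧
      (∃ T : List X → ℝ, IsTestSupermart Q T ∧
        ∀ ω : ℕ → X,
          Filter.liminf (fun n => ((M (pref ω n) : ℝ) : EReal)) Filter.atTop < f ω →
          Filter.Tendsto (fun n => T (pref ω n)) Filter.atTop Filter.atTop) ∧
      y = ((M [] : ℝ) : EReal) } := by
  apply le_antisymm
  · -- EV ≤ sInf RHS
    unfold EV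
    apply le_sInf
    rintro y ⟨M, hM, ⟨C, hC⟩, ⟨T, ⟨hTs, hT0, hT1⟩, hTconv⟩, rfl⟩
    -- show (M [] : EReal) ≥ sInf LHS via M + ε T for all ε > 0
    apply ereal_le_of_forall_add
    intro ε hε
    apply sInf_le
    refine ⟨fun s => M s + ε * T s, ?_, ⟨C, fun s => ?_⟩, ?_, by simp [hT1]⟩
    · -- supermartingale
      intro s
      have hd : pdiff (fun s => M s + ε * T s) s = pdiff M s + ε • pdiff T s := by
        funext x; simp [pdiff]; ring
      rw [hd]
      calc Q s (pdiff M s + ε • pdiff T s)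
          ≤ Q s (pdiff M s) + Q s (ε • pdiff T s) := (hQ s).2.1 _ _
        _ = Q s (pdiff M s) + ε * Q s (pdiff T s) := by rw [(hQ s).2.2 _ ε hε.le]
        _ ≤ 0 := by
            have h1 := hM s
            have h2 := hTs s
            nlinarith
    · have h1 := hT0 s
      have h2 := hC s
      simp only []
      nlinarith [mul_nonneg hε.le (hT0 s)]
    · intro ω _
      by_cases hlim : Filter.liminf (fun n => ((M (pref ω n) : ℝ) : EReal)) Filter.atTop < f ω
      · -- T → ∞ on this path, so M + εT → ∞
        have hT := hTconv ω hlim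
        have htend : Filter.Tendsto (fun n => M (pref ω n) + ε * T (pref ω n))
            Filter.atTop Filter.atTop := by
          apply Filter.tendsto_atTop_mono (fun n => ?_)
            (Filter.tendsto_atTop_add_const_left _ C
              (hT.const_mul_atTop hε))
          exact add_le_add (hC _) le_rfl
        have : Filter.Tendsto (fun n => ((M (pref ω n) + ε * T (pref ω n) : ℝ) : EReal))
            Filter.atTop (nhds ⊤) := by
          rw [EReal.tendsto_nhds_top_iff_real]
          intro x
          filter_upwards [htend.eventually_ge_atTop (x + 1)] with n hn
          exact_mod_cast lt_of_lt_of_le (by linarith : x < x + 1) hn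
        rw [this.liminf_eq]
        exact le_top
      · push_neg at hlim
        refine hlim.trans (Filter.liminf_le_liminf ?_)
        filter_upwards with n
        have : (0:ℝ) ≤ ε * T (pref ω n) := mul_nonneg hε.le (hT0 _)
        exact EReal.coe_le_coe_iff.mpr (by nlinarith [hT0 (pref ω n)])
  · -- sInf RHS ≤ EV : each element of LHS set gives an element of RHS set (with T = 1)
    unfold EV
    apply le_sInf
    rintro y ⟨M, hM, hB, hlim, rfl⟩
    apply sInf_le
    refine ⟨M, hM, hB, ⟨fun _ => 1, one_testSupermart Q hQ, fun ω h => ?_⟩, rfl⟩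
    exact absurd (hlim ω rfl) h.not_ge
end

section
/- (Lévy's zero-one law, game-theoretic version) For any gamble f on the path space Ω of an imprecise probability tree, and any real α > 1, there exists a positive test supermartingale T with process multipliers bounded by α (μT(s)(x) ≤ α for all situations s and states x) such that T converges to +∞ on every path ω for which liminf_n E_V(f | ω^n) < f(ω). -/
open Filter

set_option linter.unusedSectionVars false
section Levy
variable {X : Type*} [Fintype X] [Nonempty X] {Q : List X → (X → ℝ) → ℝ}

lemma Q_zero (hQ : Coherent Q) (s : List X) : Q s 0 = 0 := by
  have h := (hQ s).2.2 0 0 le_rfl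
  simpa using h

lemma Q_nonpos (hQ : Coherent Q) {s : List X} {h : X → ℝ} (hh : ∀ x, h x ≤ 0) :
    Q s h ≤ 0 := ((hQ s).1 h).trans (ciSup_le hh)

lemma Q_mono (hQ : Coherent Q) {s : List X} {h g : X → ℝ} (hle : ∀ x, h x ≤ g x) :
    Q s h ≤ Q s g := by
  have he : h = g + (h - g) := by funext x; simp
  calc Q s h = Q s (g + (h - g)) := by rw [← he]
    _ ≤ Q s g + Q s (h - g) := (hQ s).2.1 _ _
    _ ≤ Q s g + 0 := by
        gcongr
        exact Q_nonpos hQ (fun x => by simpa using hle x)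
    _ = Q s g := by ring

lemma exists_le_zero (hQ : Coherent Q) {s : List X} {d : X → ℝ} (hd : Q s d ≤ 0) :
    ∃ x, d x ≤ 0 := by
  obtain ⟨x0, hx0⟩ := Finite.exists_max (fun x => -d x)
  refine ⟨x0, ?_⟩
  have h1 : (0:ℝ) ≤ Q s d + Q s (-d) := by
    have := (hQ s).2.1 d (-d)
    simpa [Q_zero hQ s] using this
  have h2 : Q s (-d) ≤ -d x0 := ((hQ s).1 (-d)).trans (ciSup_le (by simpa using hx0))
  linarith

lemma isSupermart_min (hQ : Coherent Q) {M : List X → ℝ} (hM : IsSupermart Q M) (c : ℝ) :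
    IsSupermart Q (fun t => min (M t) c) := by
  intro s
  by_cases h : M s ≤ c
  · refine (Q_mono hQ (g := pdiff M s) fun x => ?_).trans (hM s)
    simp only [pdiff, min_eq_left h]
    have := min_le_left (M (s ++ [x])) c
    linarith
  · refine Q_nonpos hQ fun x => ?_
    simp only [pdiff, min_eq_right (le_of_not_ge h)]
    have := min_le_right (M (s ++ [x])) c
    linarith

lemma pref_zero (ω : ℕ → X) : pref ω 0 = [] := rfl

lemma pref_succ (ω : ℕ → X) (n : ℕ) : pref ω (n + 1) = pref ω n ++ [ω n] := by
  simp [pref, List.range_succ]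

lemma pref_length (ω : ℕ → X) (n : ℕ) : (pref ω n).length = n := by simp [pref]

lemma pref_take (ω : ℕ → X) {m n : ℕ} (h : m ≤ n) : pref ω m = (pref ω n).take m := by
  simp [pref, ← List.map_take, List.take_range, Nat.min_eq_left h]

lemma pref_of_prefix {ω : ℕ → X} {s : List X} {n : ℕ} (h : s <+: pref ω n) :
    pref ω s.length = s := by
  have hl : s.length ≤ n := by
    have := h.length_le; rwa [pref_length] at this
  rw [pref_take ω hl]
  exact (List.prefix_iff_eq_take.mp h).symm

/-- a descending path from `t` -/
lemma exists_desc (hQ : Coherent Q) {M : List X → ℝ} (hM : IsSupermart Q M) (t : List X) :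
    ∃ ω : ℕ → X, pref ω t.length = t ∧ ∀ n, t.length ≤ n → M (pref ω n) ≤ M t := by
  classical
  have hg : ∀ u : List X, ∃ x, pdiff M u x ≤ 0 := fun u => exists_le_zero hQ (hM u)
  choose g hgle using hg
  set L := t.length with hL
  let u : ℕ → List X := fun k => Nat.rec t (fun _ v => v ++ [g v]) k
  have hu0 : u 0 = t := rfl
  have husucc : ∀ k, u (k + 1) = u k ++ [g (u k)] := fun k => rfl
  let ω : ℕ → X := fun n => if h : n < L then t.get ⟨n, h⟩ else g (u (n - L))
  have hpref : ∀ k, pref ω (L + k) = u k := by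
    intro k
    induction k with
    | zero =>
      apply List.ext_getElem
      · rw [hu0]; simp [pref, hL]
      · intro i h1 h2
        simp only [pref, List.getElem_map, List.getElem_range]
        have hi : i < L := by simpa [pref] using h1
        simp only [ω, dif_pos hi]
        rfl
    | succ k ih =>
      have : L + (k + 1) = (L + k) + 1 := by omega
      rw [this, pref_succ, ih, husucc]
      congr 1
      have h1 : ¬ (L + k < L) := by omega
      have h2 : L + k - L = k := by omega
      simp only [ω, dif_neg h1, h2]
  have hdec : ∀ k, M (u k) ≤ M t := by
    intro k
    induction k with
    | zero => rw [hu0]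
    | succ k ih =>
      rw [husucc]
      have := hgle (u k)
      simp only [pdiff] at this
      linarith
  refine ⟨ω, by simpa [hu0] using hpref 0, fun n hn => ?_⟩
  have : n = L + (n - L) := by omega
  rw [this, hpref]
  exact hdec _

end Levy
section Levy2
variable {X : Type*} [Fintype X] [Nonempty X] {Q : List X → (X → ℝ) → ℝ}

/-- the path-space gamble as an `EReal` function -/
noncomputable def fE (f : (ℕ → X) → ℝ) : (ℕ → X) → EReal := fun ω => ((f ω : ℝ) : EReal)

/-- lower bound on supermartingales dominating `f` in the limit -/
lemma supermart_lb (hQ : Coherent Q) {f : (ℕ → X) → ℝ} {C : ℝ} (hfC : ∀ ω, |f ω| ≤ C)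
    {M : List X → ℝ} (hM : IsSupermart Q M) {s : List X}
    (hlim : ∀ ω, pref ω s.length = s →
      fE f ω ≤ liminf (fun n => ((M (pref ω n) : ℝ) : EReal)) atTop)
    {t : List X} (hst : s <+: t) : -C ≤ M t := by
  obtain ⟨ω, hω1, hω2⟩ := exists_desc hQ hM t
  have hωs : pref ω s.length = s := by
    refine pref_of_prefix (n := t.length) ?_
    rw [hω1]; exact hst
  have h1 : fE f ω ≤ liminf (fun n => ((M (pref ω n) : ℝ) : EReal)) atTop := hlim ω hωs
  have h2 : liminf (fun n => ((M (pref ω n) : ℝ) : EReal)) atTop ≤ ((M t : ℝ) : EReal) := by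
    have hfreq : ∃ᶠ n in atTop, ((M (pref ω n) : ℝ) : EReal) ≤ ((M t : ℝ) : EReal) := by
      apply Eventually.frequently
      filter_upwards [eventually_ge_atTop t.length] with n hn
      exact_mod_cast hω2 n hn
    exact liminf_le_of_frequently_le hfreq
  have h3 : ((-C : ℝ) : EReal) ≤ ((M t : ℝ) : EReal) := by
    refine le_trans ?_ (h1.trans h2)
    simp only [fE, EReal.coe_le_coe_iff]
    have := abs_le.mp (hfC ω)
    linarith [this.1]
  exact_mod_cast h3

lemma exists_witness {f : (ℕ → X) → ℝ} {s : List X} {a : ℝ}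
    (h : EV Q (fE f) s < ((a : ℝ) : EReal)) :
    ∃ M : List X → ℝ, IsSupermart Q M ∧
      (∀ ω, pref ω s.length = s →
        fE f ω ≤ liminf (fun n => ((M (pref ω n) : ℝ) : EReal)) atTop) ∧ M s < a := by
  rw [EV, sInf_lt_iff] at h
  obtain ⟨y, ⟨M, hM1, _, hM3, hy⟩, hlt⟩ := h
  refine ⟨M, hM1, hM3, ?_⟩
  rw [hy] at hlt
  exact_mod_cast hlt

/-- chosen truncated supermartingale witnessing `EV < a` at `s` (junk `0` otherwise) -/
noncomputable def NN (Q : List X → (X → ℝ) → ℝ) (f : (ℕ → X) → ℝ) (C a : ℝ) (s : List X) :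
    List X → ℝ := by
  classical
  exact if h : EV Q (fE f) s < ((a : ℝ) : EReal) then
    fun t => min (Classical.choose (exists_witness h) t) C
  else fun _ => 0

lemma NN_supermart (hQ : Coherent Q) (f : (ℕ → X) → ℝ) (C a : ℝ) (s : List X) :
    IsSupermart Q (NN Q f C a s) := by
  classical
  rw [NN]
  split_ifs with h
  · exact isSupermart_min hQ (Classical.choose_spec (exists_witness h)).1 C
  · intro u
    have : pdiff (fun _ : List X => (0:ℝ)) u = 0 := by funext x; simp [pdiff]
    rw [this, Q_zero hQ]

lemma NN_le {f : (ℕ → X) → ℝ} {C : ℝ} (hC : 0 ≤ C) (a : ℝ) (s t : List X) :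
    NN Q f C a s t ≤ C := by
  classical
  rw [NN]
  split_ifs with h
  · exact min_le_right _ _
  · exact hC

lemma NN_self_lt {f : (ℕ → X) → ℝ} {C a : ℝ} {s : List X}
    (h : EV Q (fE f) s < ((a : ℝ) : EReal)) : NN Q f C a s s < a := by
  classical
  rw [NN, dif_pos h]
  exact lt_of_le_of_lt (min_le_left _ _) (Classical.choose_spec (exists_witness h)).2.2

lemma NN_liminf {f : (ℕ → X) → ℝ} {C a : ℝ} {s : List X} (hfC : ∀ ω, |f ω| ≤ C)
    (h : EV Q (fE f) s < ((a : ℝ) : EReal)) :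
    ∀ ω, pref ω s.length = s →
      fE f ω ≤ liminf (fun n => ((NN Q f C a s (pref ω n) : ℝ) : EReal)) atTop := by
  classical
  intro ω hω
  obtain ⟨hM1, hM2, hM3⟩ := Classical.choose_spec (exists_witness h)
  set M := Classical.choose (exists_witness h) with hMdef
  have hNt : ∀ t, NN Q f C a s t = min (M t) C := by
    intro t; rw [NN, dif_pos h]
  have hfle := hM2 ω hω
  rw [le_liminf_iff] at hfle ⊢
  intro y hy
  have hyC : y < ((C : ℝ) : EReal) := by
    refine lt_of_lt_of_le hy ?_
    simp only [fE, EReal.coe_le_coe_iff]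
    exact (abs_le.mp (hfC ω)).1 |> fun h1 => (abs_le.mp (hfC ω)).2
  filter_upwards [hfle y hy] with n hn
  rw [hNt]
  have : ((min (M (pref ω n)) C : ℝ) : EReal) = min ((M (pref ω n) : ℝ) : EReal) ((C:ℝ) : EReal) := by
    rcases le_total (M (pref ω n)) C with h1 | h1
    · rw [min_eq_left h1, min_eq_left (by exact_mod_cast h1)]
    · rw [min_eq_right h1, min_eq_right (by exact_mod_cast h1)]
  rw [this, lt_min_iff]
  exact ⟨hn, hyC⟩

lemma NN_lb (hQ : Coherent Q) {f : (ℕ → X) → ℝ} {C a : ℝ} {s : List X}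
    (hfC : ∀ ω, |f ω| ≤ C) (h : EV Q (fE f) s < ((a : ℝ) : EReal))
    {t : List X} (hst : s <+: t) : -C ≤ NN Q f C a s t :=
  supermart_lb hQ hfC (NN_supermart hQ f C a s) (NN_liminf hfC h) hst

end Levy2
section Levy3
variable {X : Type*} [Fintype X] [Nonempty X]

open Classical in
/-- possibly activate a phase at situation `u` with current capital `c` -/
noncomputable def acti (Q : List X → (X → ℝ) → ℝ) (f : (ℕ → X) → ℝ) (a : ℝ)
    (c : ℝ) (u : List X) : ℝ × Option (List X) :=
  if EV Q (fE f) u < ((a : ℝ) : EReal) then (c, some u) else (c, none)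

open Classical in
/-- one transition of the betting machine, arriving at situation `u` -/
noncomputable def mstep (Q : List X → (X → ℝ) → ℝ) (f : (ℕ → X) → ℝ) (C a bp l : ℝ)
    (st : ℝ × Option (List X)) (u : List X) : ℝ × Option (List X) :=
  match st.2 with
  | none => acti Q f a st.1 u
  | some s₀ =>
      if NN Q f C a s₀ u < bp then (st.1, some s₀)
      else acti Q f a (st.1 * (1 + l * (NN Q f C a s₀ u - NN Q f C a s₀ s₀))) u

/-- machine state, indexed by reversed situations -/
noncomputable def mrev (Q : List X → (X → ℝ) → ℝ) (f : (ℕ → X) → ℝ) (C a bp l : ℝ) :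
    List X → ℝ × Option (List X)
  | [] => acti Q f a 1 []
  | x :: r => mstep Q f C a bp l (mrev Q f C a bp l r) (x :: r).reverse

/-- machine state at a situation -/
noncomputable def Phi (Q : List X → (X → ℝ) → ℝ) (f : (ℕ → X) → ℝ) (C a bp l : ℝ)
    (t : List X) : ℝ × Option (List X) := mrev Q f C a bp l t.reverse

/-- the capital process of the betting machine -/
noncomputable def TT (Q : List X → (X → ℝ) → ℝ) (f : (ℕ → X) → ℝ) (C a bp l : ℝ)
    (t : List X) : ℝ :=
  match (Phi Q f C a bp l t).2 with
  | none => (Phi Q f C a bp l t).1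
  | some s₀ => (Phi Q f C a bp l t).1 * (1 + l * (NN Q f C a s₀ t - NN Q f C a s₀ s₀))

variable {Q : List X → (X → ℝ) → ℝ} {f : (ℕ → X) → ℝ} {C a b bp l : ℝ}

lemma Phi_nil : Phi Q f C a bp l [] = acti Q f a 1 [] := by
  simp [Phi, mrev]

lemma Phi_snoc (t : List X) (x : X) :
    Phi Q f C a bp l (t ++ [x]) = mstep Q f C a bp l (Phi Q f C a bp l t) (t ++ [x]) := by
  have h : (t ++ [x]).reverse = x :: t.reverse := by simp
  rw [Phi, h, mrev]
  simp [Phi]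

lemma acti_fst (c : ℝ) (u : List X) : (acti Q f a c u).1 = c := by
  rw [acti]; split_ifs <;> rfl

lemma TT_of_acti {c : ℝ} {u : List X} (hu : Phi Q f C a bp l u = acti Q f a c u) :
    TT Q f C a bp l u = c := by
  rw [TT, hu, acti]
  split_ifs with h
  · simp
  · rfl

lemma TT_none {t : List X} (h : (Phi Q f C a bp l t).2 = none) :
    TT Q f C a bp l t = (Phi Q f C a bp l t).1 := by
  rw [TT, h]

lemma TT_some {t s₀ : List X} (h : (Phi Q f C a bp l t).2 = some s₀) :
    TT Q f C a bp l t
      = (Phi Q f C a bp l t).1 * (1 + l * (NN Q f C a s₀ t - NN Q f C a s₀ s₀)) := by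
  rw [TT, h]

lemma mstep_none {st : ℝ × Option (List X)} (h : st.2 = none) (u : List X) :
    mstep Q f C a bp l st u = acti Q f a st.1 u := by
  simp only [mstep, h]

open Classical in
lemma mstep_some {st : ℝ × Option (List X)} {s₀ : List X} (h : st.2 = some s₀) (u : List X) :
    mstep Q f C a bp l st u =
      if NN Q f C a s₀ u < bp then (st.1, some s₀)
      else acti Q f a (st.1 * (1 + l * (NN Q f C a s₀ u - NN Q f C a s₀ s₀))) u := by
  simp only [mstep, h]

lemma acti_active {c : ℝ} {u s₁ : List X} (h : (acti Q f a c u).2 = some s₁) :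
    s₁ = u ∧ EV Q (fE f) u < ((a : ℝ) : EReal) := by
  rw [acti] at h
  split_ifs at h with h'
  · have h2 : some u = some s₁ := h
    exact ⟨(Option.some_injective _ h2).symm, h'⟩

/-- machine invariant -/
def MInv (Q : List X → (X → ℝ) → ℝ) (f : (ℕ → X) → ℝ) (C a bp l : ℝ) (t : List X) : Prop :=
  1 ≤ (Phi Q f C a bp l t).1 ∧
    ∀ s₀, (Phi Q f C a bp l t).2 = some s₀ →
      s₀ <+: t ∧ EV Q (fE f) s₀ < ((a : ℝ) : EReal) ∧ NN Q f C a s₀ t < bp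

section Machine
variable (habp : a < bp) (hl0 : 0 ≤ l)

include habp hl0 in
lemma minv_all (t : List X) : MInv Q f C a bp l t := by
  induction t using List.reverseRecOn with
  | nil =>
    refine ⟨?_, fun s₀ hs₀ => ?_⟩
    · rw [Phi_nil, acti_fst]
    · rw [Phi_nil] at hs₀
      obtain ⟨rfl, h⟩ := acti_active hs₀
      exact ⟨List.prefix_refl _, h, lt_trans (NN_self_lt h) habp⟩
  | append_singleton t x ih =>
    obtain ⟨ih1, ih2⟩ := ih
    rcases hst : (Phi Q f C a bp l t).2 with _ | s₀
    · -- waiting at t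
      refine ⟨?_, fun s₁ hs₁ => ?_⟩
      · rw [Phi_snoc, mstep_none hst, acti_fst]; exact ih1
      · rw [Phi_snoc, mstep_none hst] at hs₁
        obtain ⟨rfl, h⟩ := acti_active hs₁
        exact ⟨List.prefix_refl _, h, lt_trans (NN_self_lt h) habp⟩
    · -- active at t with anchor s₀
      obtain ⟨hpre, hEV, hNN⟩ := ih2 s₀ hst
      by_cases h : NN Q f C a s₀ (t ++ [x]) < bp
      · refine ⟨?_, fun s₁ hs₁ => ?_⟩
        · rw [Phi_snoc, mstep_some hst, if_pos h]; exact ih1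
        · rw [Phi_snoc, mstep_some hst, if_pos h] at hs₁
          have h2 : some s₀ = some s₁ := hs₁
          obtain rfl := Option.some_injective _ h2
          exact ⟨hpre.trans (List.prefix_append _ _), hEV, h⟩
      · have hb' : bp ≤ NN Q f C a s₀ (t ++ [x]) := le_of_not_gt h
        have hcap : 1 ≤ (Phi Q f C a bp l t).1 *
            (1 + l * (NN Q f C a s₀ (t ++ [x]) - NN Q f C a s₀ s₀)) := by
          have h1 : NN Q f C a s₀ s₀ < a := NN_self_lt hEV
          have h2 : (0:ℝ) ≤ l * (NN Q f C a s₀ (t ++ [x]) - NN Q f C a s₀ s₀) :=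
            mul_nonneg hl0 (by linarith)
          nlinarith
        refine ⟨?_, fun s₁ hs₁ => ?_⟩
        · rw [Phi_snoc, mstep_some hst, if_neg h, acti_fst]; exact hcap
        · rw [Phi_snoc, mstep_some hst, if_neg h] at hs₁
          obtain ⟨rfl, h'⟩ := acti_active hs₁
          exact ⟨List.prefix_refl _, h', lt_trans (NN_self_lt h') habp⟩

end Machine
end Levy3
section Levy4
variable {X : Type*} [Fintype X] [Nonempty X]
variable {Q : List X → (X → ℝ) → ℝ} {f : (ℕ → X) → ℝ} {C a bp l : ℝ}

lemma TT_succ_none {t : List X} {x : X} (hst : (Phi Q f C a bp l t).2 = none) :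
    TT Q f C a bp l (t ++ [x]) = (Phi Q f C a bp l t).1 := by
  apply TT_of_acti
  rw [Phi_snoc, mstep_none hst]

open Classical in
lemma TT_succ_some {t s₀ : List X} {x : X} (hst : (Phi Q f C a bp l t).2 = some s₀) :
    TT Q f C a bp l (t ++ [x]) = (Phi Q f C a bp l t).1 *
      (1 + l * (NN Q f C a s₀ (t ++ [x]) - NN Q f C a s₀ s₀)) := by
  by_cases h : NN Q f C a s₀ (t ++ [x]) < bp
  · have hP : Phi Q f C a bp l (t ++ [x]) = ((Phi Q f C a bp l t).1, some s₀) := by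
      rw [Phi_snoc, mstep_some hst, if_pos h]
    have h2 : (Phi Q f C a bp l (t ++ [x])).2 = some s₀ := by rw [hP]
    rw [TT_some h2, hP]
  · apply TT_of_acti
    rw [Phi_snoc, mstep_some hst, if_neg h]

section MachineAnalytic
variable (hQ : Coherent Q) (hfC : ∀ ω, |f ω| ≤ C) (hC : 0 < C)
  (habp : a < bp) (hl0 : 0 < l) (hlC : l * C ≤ 1/4)

include habp hl0 in
lemma cap_pos (t : List X) : 0 < (Phi Q f C a bp l t).1 :=
  lt_of_lt_of_le zero_lt_one (minv_all habp hl0.le t).1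

include hQ hfC hC habp hl0 in
lemma active_bounds {t s₀ : List X} (hst : (Phi Q f C a bp l t).2 = some s₀) :
    -C ≤ NN Q f C a s₀ t ∧ NN Q f C a s₀ t ≤ C ∧
      -C ≤ NN Q f C a s₀ s₀ ∧ NN Q f C a s₀ s₀ ≤ C := by
  obtain ⟨hpre, hEV, _⟩ := (minv_all habp hl0.le t).2 s₀ hst
  exact ⟨NN_lb hQ hfC hEV hpre, NN_le hC.le _ _ _,
    NN_lb hQ hfC hEV (List.prefix_refl _), NN_le hC.le _ _ _⟩

include hQ hfC hC habp hl0 hlC in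
lemma factor_ge {t s₀ : List X} (hst : (Phi Q f C a bp l t).2 = some s₀) :
    1/2 ≤ 1 + l * (NN Q f C a s₀ t - NN Q f C a s₀ s₀) := by
  obtain ⟨h1, h2, h3, h4⟩ := active_bounds hQ hfC hC habp hl0 hst
  nlinarith

include hQ hfC hC habp hl0 hlC in
lemma TT_ge_half_cap (t : List X) :
    (Phi Q f C a bp l t).1 / 2 ≤ TT Q f C a bp l t := by
  have hcap : 0 < (Phi Q f C a bp l t).1 := cap_pos habp hl0 t
  rcases hst : (Phi Q f C a bp l t).2 with _ | s₀
  · rw [TT_none hst]; linarith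
  · rw [TT_some hst]
    have := factor_ge hQ hfC hC habp hl0 hlC hst
    nlinarith

include hQ hfC hC habp hl0 hlC in
lemma TT_pos (t : List X) : 0 < TT Q f C a bp l t := by
  have hcap : 0 < (Phi Q f C a bp l t).1 := cap_pos habp hl0 t
  have := TT_ge_half_cap hQ hfC hC habp hl0 hlC t
  linarith

include hQ hfC hC habp hl0 hlC in
lemma TT_supermart : IsSupermart Q (TT Q f C a bp l) := by
  intro t
  rcases hst : (Phi Q f C a bp l t).2 with _ | s₀
  · have hd : pdiff (TT Q f C a bp l) t = 0 := by
      funext x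
      simp only [pdiff, TT_succ_none hst, TT_none hst, Pi.zero_apply, sub_self]
    rw [hd, Q_zero hQ]
  · have hd : pdiff (TT Q f C a bp l) t
        = ((Phi Q f C a bp l t).1 * l) • pdiff (NN Q f C a s₀) t := by
      funext x
      simp only [pdiff, TT_succ_some hst, TT_some hst, Pi.smul_apply, smul_eq_mul]
      ring
    have hcap : 0 < (Phi Q f C a bp l t).1 := cap_pos habp hl0 t
    rw [hd, (hQ t).2.2 _ _ (mul_nonneg hcap.le hl0.le)]
    have h2 := NN_supermart hQ f C a s₀ t
    calc (Phi Q f C a bp l t).1 * l * Q t (pdiff (NN Q f C a s₀) t)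
        ≤ (Phi Q f C a bp l t).1 * l * 0 :=
          mul_le_mul_of_nonneg_left h2 (mul_nonneg hcap.le hl0.le)
      _ = 0 := by ring

include hQ hfC hC habp hl0 hlC in
lemma TT_mult (t : List X) (x : X) :
    TT Q f C a bp l (t ++ [x]) ≤ (1 + 4 * l * C) * TT Q f C a bp l t := by
  have hTpos := TT_pos hQ hfC hC habp hl0 hlC t
  rcases hst : (Phi Q f C a bp l t).2 with _ | s₀
  · rw [TT_succ_none hst, TT_none hst]
    have hcap : 0 < (Phi Q f C a bp l t).1 := cap_pos habp hl0 t
    nlinarith [mul_nonneg hl0.le hC.le]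
  · rw [TT_succ_some hst, TT_some hst]
    obtain ⟨h1, h2, h3, h4⟩ := active_bounds hQ hfC hC habp hl0 hst
    have h5 : -C ≤ NN Q f C a s₀ (t ++ [x]) := by
      obtain ⟨hpre, hEV, _⟩ := (minv_all habp hl0.le t).2 s₀ hst
      exact NN_lb hQ hfC hEV (hpre.trans (List.prefix_append _ _))
    have h6 : NN Q f C a s₀ (t ++ [x]) ≤ C := NN_le hC.le _ _ _
    have hfac := factor_ge hQ hfC hC habp hl0 hlC hst
    have hcap : 0 < (Phi Q f C a bp l t).1 := cap_pos habp hl0 t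
    have key : 1 + l * (NN Q f C a s₀ (t ++ [x]) - NN Q f C a s₀ s₀)
        ≤ (1 + 4 * l * C) * (1 + l * (NN Q f C a s₀ t - NN Q f C a s₀ s₀)) := by
      nlinarith [mul_nonneg hl0.le hC.le]
    calc (Phi Q f C a bp l t).1 * (1 + l * (NN Q f C a s₀ (t ++ [x]) - NN Q f C a s₀ s₀))
        ≤ (Phi Q f C a bp l t).1 *
          ((1 + 4 * l * C) * (1 + l * (NN Q f C a s₀ t - NN Q f C a s₀ s₀))) := by
          exact mul_le_mul_of_nonneg_left key hcap.le
      _ = (1 + 4 * l * C) * ((Phi Q f C a bp l t).1 *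
          (1 + l * (NN Q f C a s₀ t - NN Q f C a s₀ s₀))) := by ring

include hQ hfC hC habp hl0 in
lemma cap_succ_ge (t : List X) (x : X) :
    (Phi Q f C a bp l t).1 ≤ (Phi Q f C a bp l (t ++ [x])).1 := by
  rcases hst : (Phi Q f C a bp l t).2 with _ | s₀
  · rw [Phi_snoc, mstep_none hst, acti_fst]
  · rw [Phi_snoc, mstep_some hst]
    split_ifs with h
    · rfl
    · rw [acti_fst]
      obtain ⟨hpre, hEV, _⟩ := (minv_all habp hl0.le t).2 s₀ hst
      have h1 : NN Q f C a s₀ s₀ < a := NN_self_lt hEV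
      have h2 : bp ≤ NN Q f C a s₀ (t ++ [x]) := le_of_not_gt h
      have hcap : 0 < (Phi Q f C a bp l t).1 := cap_pos habp hl0 t
      have h3 : 0 ≤ l * (NN Q f C a s₀ (t ++ [x]) - NN Q f C a s₀ s₀) :=
        mul_nonneg hl0.le (by linarith)
      nlinarith [mul_nonneg hcap.le h3]

lemma TT_nil : TT Q f C a bp l [] = 1 := TT_of_acti Phi_nil

end MachineAnalytic
end Levy4
section Levy5
variable {X : Type*} [Fintype X] [Nonempty X]
variable {Q : List X → (X → ℝ) → ℝ} {f : (ℕ → X) → ℝ} {C a bp l : ℝ}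

section Diverge
variable (hQ : Coherent Q) (hfC : ∀ ω, |f ω| ≤ C) (hC : 0 < C)
  (habp : a < bp) (hl0 : 0 < l) (hlC : l * C ≤ 1/4)

include hQ hfC hC habp hl0 in
lemma cap_mono_path (ω : ℕ → X) : Monotone (fun n => (Phi Q f C a bp l (pref ω n)).1) := by
  apply monotone_nat_of_le_succ
  intro n
  rw [pref_succ]
  exact cap_succ_ge hQ hfC hC habp hl0 _ _

lemma active_of_EV {ω : ℕ → X} {n : ℕ}
    (h : EV Q (fE f) (pref ω n) < ((a : ℝ) : EReal)) :
    ∃ s₀, (Phi Q f C a bp l (pref ω n)).2 = some s₀ := by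
  classical
  cases n with
  | zero =>
    refine ⟨[], ?_⟩
    rw [pref_zero, Phi_nil, acti, if_pos (by rw [pref_zero] at h; exact h)]
  | succ n =>
    rw [pref_succ] at h ⊢
    rcases hst : (Phi Q f C a bp l (pref ω n)).2 with _ | s₀
    · refine ⟨pref ω n ++ [ω n], ?_⟩
      rw [Phi_snoc, mstep_none hst, acti, if_pos h]
    · by_cases hg : NN Q f C a s₀ (pref ω n ++ [ω n]) < bp
      · exact ⟨s₀, by rw [Phi_snoc, mstep_some hst, if_pos hg]⟩
      · refine ⟨pref ω n ++ [ω n], ?_⟩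
        rw [Phi_snoc, mstep_some hst, if_neg hg, acti, if_pos h]

include hQ hfC hC habp hl0 hlC in
lemma cap_gain {ω : ℕ → X} {m : ℕ} {s₀ : List X} (hbω : bp < f ω)
    (hst : (Phi Q f C a bp l (pref ω m)).2 = some s₀) :
    ∃ n, m < n ∧
      (1 + l * (bp - a)) * (Phi Q f C a bp l (pref ω m)).1
        ≤ (Phi Q f C a bp l (pref ω n)).1 := by
  classical
  obtain ⟨hpre, hEV, _⟩ := (minv_all habp hl0.le (pref ω m)).2 s₀ hst
  have hωs : pref ω s₀.length = s₀ := pref_of_prefix hpre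
  have hlim := NN_liminf hfC hEV ω hωs
  have hblt : ((bp : ℝ) : EReal) < liminf
      (fun n => ((NN Q f C a s₀ (pref ω n) : ℝ) : EReal)) atTop :=
    lt_of_lt_of_le (by simp only [fE]; exact_mod_cast hbω) hlim
  have hev : ∀ᶠ n in atTop, ((bp : ℝ) : EReal) < ((NN Q f C a s₀ (pref ω n) : ℝ) : EReal) :=
    eventually_lt_of_lt_liminf hblt
  obtain ⟨J, hJ⟩ := eventually_atTop.mp hev
  have hex : ∃ k, ¬ (Phi Q f C a bp l (pref ω (m + 1 + k))).2 = some s₀ := by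
    refine ⟨max (m + 1) J - (m + 1), ?_⟩
    intro hP
    have heq : m + 1 + (max (m + 1) J - (m + 1)) = max (m + 1) J := by omega
    rw [heq] at hP
    obtain ⟨_, _, hNN⟩ := (minv_all habp hl0.le _).2 s₀ hP
    have := hJ (max (m + 1) J) (le_max_right _ _)
    rw [EReal.coe_lt_coe_iff] at this
    linarith
  set k₀ := Nat.find hex with hk₀
  have hnot := Nat.find_spec hex
  have hprev : (Phi Q f C a bp l (pref ω (m + k₀))).2 = some s₀ := by
    rcases Nat.eq_zero_or_pos k₀ with h0 | hpos
    · rw [h0]; simpa using hst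
    · have := Nat.find_min hex (m := k₀ - 1) (by omega)
      push_neg at this
      have heq : m + 1 + (k₀ - 1) = m + k₀ := by omega
      rwa [heq] at this
  obtain ⟨hpre', hEV', _⟩ := (minv_all habp hl0.le (pref ω (m + k₀))).2 s₀ hprev
  have hstep : pref ω (m + 1 + k₀) = pref ω (m + k₀) ++ [ω (m + k₀)] := by
    have : m + 1 + k₀ = (m + k₀) + 1 := by omega
    rw [this, pref_succ]
  have hg : ¬ NN Q f C a s₀ (pref ω (m + k₀) ++ [ω (m + k₀)]) < bp := by
    intro hg
    apply hnot
    rw [hstep, Phi_snoc, mstep_some hprev, if_pos hg]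
  refine ⟨m + 1 + k₀, by omega, ?_⟩
  have hPn : (Phi Q f C a bp l (pref ω (m + 1 + k₀))).1
      = (Phi Q f C a bp l (pref ω (m + k₀))).1 *
        (1 + l * (NN Q f C a s₀ (pref ω (m + k₀) ++ [ω (m + k₀)]) - NN Q f C a s₀ s₀)) := by
    rw [hstep, Phi_snoc, mstep_some hprev, if_neg hg, acti_fst]
  rw [hPn]
  have h1 : NN Q f C a s₀ s₀ < a := NN_self_lt hEV'
  have h2 : bp ≤ NN Q f C a s₀ (pref ω (m + k₀) ++ [ω (m + k₀)]) := le_of_not_gt hg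
  have hm : (Phi Q f C a bp l (pref ω m)).1 ≤ (Phi Q f C a bp l (pref ω (m + k₀))).1 :=
    cap_mono_path hQ hfC hC habp hl0 ω (by omega)
  have hcapm : 0 < (Phi Q f C a bp l (pref ω m)).1 := cap_pos habp hl0 _
  have hcapk : 0 < (Phi Q f C a bp l (pref ω (m + k₀))).1 := cap_pos habp hl0 _
  have hρ : 0 < 1 + l * (bp - a) := by
    have := mul_pos hl0 (sub_pos.mpr habp); linarith
  calc (1 + l * (bp - a)) * (Phi Q f C a bp l (pref ω m)).1
      ≤ (1 + l * (bp - a)) * (Phi Q f C a bp l (pref ω (m + k₀))).1 := by nlinarith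
    _ ≤ _ := by
        have hdiff : l * (bp - a) ≤ l *
            (NN Q f C a s₀ (pref ω (m + k₀) ++ [ω (m + k₀)]) - NN Q f C a s₀ s₀) :=
          mul_le_mul_of_nonneg_left (by linarith) hl0.le
        nlinarith [mul_nonneg (sub_nonneg.mpr hdiff) hcapk.le]

include hQ hfC hC habp hl0 hlC in
lemma TT_diverge {ω : ℕ → X} (hbω : bp < f ω)
    (hfreq : ∃ᶠ n in atTop, EV Q (fE f) (pref ω n) < ((a : ℝ) : EReal)) :
    Tendsto (fun n => TT Q f C a bp l (pref ω n)) atTop atTop := by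
  classical
  set ρ : ℝ := 1 + l * (bp - a) with hρdef
  have hρ : 1 < ρ := by have : 0 < l * (bp - a) := mul_pos hl0 (by linarith); linarith
  have hcap : ∀ k : ℕ, ∃ n, ρ ^ k ≤ (Phi Q f C a bp l (pref ω n)).1 := by
    intro k
    induction k with
    | zero =>
      refine ⟨0, ?_⟩
      rw [pow_zero, pref_zero, Phi_nil, acti_fst]
    | succ k ih =>
      obtain ⟨n, hn⟩ := ih
      obtain ⟨m, hmn, hEV⟩ := (frequently_atTop.mp hfreq) n
      obtain ⟨s₀, hs₀⟩ := active_of_EV (l := l) (bp := bp) hEV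
      obtain ⟨n', hn'1, hn'2⟩ := cap_gain hQ hfC hC habp hl0 hlC hbω hs₀
      refine ⟨n', ?_⟩
      have h1 : (Phi Q f C a bp l (pref ω n)).1 ≤ (Phi Q f C a bp l (pref ω m)).1 :=
        cap_mono_path hQ hfC hC habp hl0 ω hmn
      have hρ0 : (0:ℝ) < ρ := by linarith
      calc ρ ^ (k + 1) = ρ * ρ ^ k := by ring
        _ ≤ ρ * (Phi Q f C a bp l (pref ω m)).1 := by nlinarith
        _ ≤ _ := hn'2
  have hcaptend : Tendsto (fun n => (Phi Q f C a bp l (pref ω n)).1) atTop atTop := by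
    rw [tendsto_atTop]
    intro B
    obtain ⟨k, hk⟩ := pow_unbounded_of_one_lt B hρ
    obtain ⟨n₀, hn₀⟩ := hcap k
    filter_upwards [eventually_ge_atTop n₀] with n hn
    have := cap_mono_path hQ hfC hC habp hl0 ω hn
    simp only at this
    linarith
  have hhalf : Tendsto (fun n => (Phi Q f C a bp l (pref ω n)).1 / 2) atTop atTop :=
    hcaptend.atTop_div_const (by norm_num)
  exact tendsto_atTop_mono
    (fun n => TT_ge_half_cap hQ hfC hC habp hl0 hlC (pref ω n)) hhalf

end Diverge
end Levy5
section Levy6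
variable {X : Type*} [Fintype X] [Nonempty X]
variable {Q : List X → (X → ℝ) → ℝ} {α : ℝ} {G : ℕ → List X → ℝ}

lemma Q_finsum {ι : Type*} (hQ : Coherent Q) {s : List X} (F : Finset ι) (g : ι → X → ℝ)
    (hg : ∀ i ∈ F, Q s (g i) ≤ 0) : Q s (∑ i ∈ F, g i) ≤ 0 := by
  classical
  induction F using Finset.cons_induction with
  | empty => simp [Q_zero hQ]
  | cons i F hi ih =>
    rw [Finset.sum_cons]
    calc Q s (g i + ∑ j ∈ F, g j) ≤ Q s (g i) + Q s (∑ j ∈ F, g j) := (hQ s).2.1 _ _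
      _ ≤ 0 + 0 := add_le_add (hg i (Finset.mem_cons_self _ _))
          (ih fun j hj => hg j (Finset.mem_cons_of_mem hj))
      _ = 0 := by ring

section Combine
variable (hα : 1 < α) (hQ : Coherent Q)
  (hG1 : ∀ k, IsSupermart Q (G k))
  (hG2 : ∀ k t, 0 < G k t)
  (hG3 : ∀ k, G k [] = 1)
  (hG4 : ∀ k t x, G k (t ++ [x]) ≤ α * G k t)

include hα hG2 hG3 hG4 in
lemma G_le_pow (k : ℕ) (t : List X) : G k t ≤ α ^ t.length := by
  induction t using List.reverseRecOn with
  | nil => simp [hG3 k]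
  | append_singleton t x ih =>
    have h1 := hG4 k t x
    have h2 : α * G k t ≤ α * α ^ t.length :=
      mul_le_mul_of_nonneg_left ih (by linarith)
    simp only [List.length_append, List.length_singleton]
    calc G k (t ++ [x]) ≤ α * α ^ t.length := h1.trans h2
      _ = α ^ (t.length + 1) := by ring

include hα hG2 hG3 hG4 in
lemma csum_summable (t : List X) : Summable (fun k => (1/2:ℝ) ^ (k+1) * G k t) := by
  have hgs : Summable (fun k => (1/2:ℝ) ^ k * ((1/2) * α ^ t.length)) :=
    summable_geometric_two.mul_right _
  refine Summable.of_nonneg_of_le (fun k => mul_nonneg (by positivity) (hG2 k t).le)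
    (fun k => ?_) hgs
  · have := G_le_pow hα hG2 hG3 hG4 k t
    have h2 : (0:ℝ) < (1/2:ℝ) ^ (k+1) := by positivity
    calc (1/2:ℝ) ^ (k+1) * G k t ≤ (1/2:ℝ) ^ (k+1) * α ^ t.length :=
        mul_le_mul_of_nonneg_left this h2.le
      _ = (1/2:ℝ) ^ k * ((1/2) * α ^ t.length) := by ring

/-- the combined process -/
noncomputable def Tsum (G : ℕ → List X → ℝ) (t : List X) : ℝ :=
  ∑' k, (1/2:ℝ) ^ (k+1) * G k t

include hα hG2 hG3 hG4 in
lemma Tsum_nil : Tsum G [] = 1 := by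
  rw [Tsum]
  have h1 : (fun k => (1/2:ℝ) ^ (k+1) * G k []) = fun k => (1/2:ℝ) ^ k * (1/2) := by
    funext k; rw [hG3 k]; ring
  rw [h1, tsum_mul_right, tsum_geometric_two]
  norm_num

include hα hG2 hG3 hG4 in
lemma le_Tsum (k : ℕ) (t : List X) : (1/2:ℝ) ^ (k+1) * G k t ≤ Tsum G t :=
  Summable.le_tsum (csum_summable hα hG2 hG3 hG4 t) k
    (fun j _ => mul_nonneg (by positivity) (hG2 j t).le)

include hα hG2 hG3 hG4 in
lemma Tsum_pos (t : List X) : 0 < Tsum G t :=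
  lt_of_lt_of_le (mul_pos (by positivity) (hG2 0 t))
    (le_Tsum hα hG2 hG3 hG4 0 t)

include hα hG2 hG3 hG4 in
lemma Tsum_mult (t : List X) (x : X) : Tsum G (t ++ [x]) ≤ α * Tsum G t := by
  rw [Tsum, Tsum, ← tsum_mul_left]
  apply Summable.tsum_le_tsum _ (csum_summable hα hG2 hG3 hG4 _)
    ((csum_summable hα hG2 hG3 hG4 t).mul_left α)
  intro k
  have := hG4 k t x
  have h2 : (0:ℝ) < (1/2:ℝ) ^ (k+1) := by positivity
  calc (1/2:ℝ) ^ (k+1) * G k (t ++ [x]) ≤ (1/2:ℝ) ^ (k+1) * (α * G k t) :=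
      mul_le_mul_of_nonneg_left this h2.le
    _ = α * ((1/2:ℝ) ^ (k+1) * G k t) := by ring

include hα hQ hG1 hG2 hG3 hG4 in
lemma Tsum_supermart : IsSupermart Q (Tsum G) := by
  intro t
  set L := t.length with hL
  set B : ℝ := α ^ (L+1) + α ^ L with hB
  have hα0 : (0:ℝ) < α := by linarith
  have hB0 : 0 < B := by positivity
  -- summability of the difference series
  have hdsum : ∀ x, Summable (fun k => (1/2:ℝ) ^ (k+1) * pdiff (G k) t x) := by
    intro x
    have h1 : (fun k => (1/2:ℝ) ^ (k+1) * pdiff (G k) t x)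
        = fun k => (1/2:ℝ) ^ (k+1) * G k (t ++ [x]) - (1/2:ℝ) ^ (k+1) * G k t := by
      funext k; rw [pdiff]; ring
    rw [h1]
    exact (csum_summable hα hG2 hG3 hG4 _).sub (csum_summable hα hG2 hG3 hG4 t)
  have hdeq : ∀ x, pdiff (Tsum G) t x = ∑' k, (1/2:ℝ) ^ (k+1) * pdiff (G k) t x := by
    intro x
    rw [pdiff, Tsum, Tsum, ← Summable.tsum_sub (csum_summable hα hG2 hG3 hG4 _)
      (csum_summable hα hG2 hG3 hG4 t)]
    congr 1; funext k; rw [pdiff]; ring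
  -- pointwise bound on each difference term
  have hterm : ∀ k x, |pdiff (G k) t x| ≤ B := by
    intro k x
    rw [abs_le, pdiff]
    have h1 := G_le_pow hα hG2 hG3 hG4 k (t ++ [x])
    have h2 := G_le_pow hα hG2 hG3 hG4 k t
    have h3 := (hG2 k (t ++ [x])).le
    have h4 := (hG2 k t).le
    simp only [List.length_append, List.length_singleton] at h1
    constructor <;> [nlinarith; nlinarith]
  -- the tail bound
  have htail : ∀ (N : ℕ) (x : X),
      |pdiff (Tsum G) t x - ∑ k ∈ Finset.range N, (1/2:ℝ) ^ (k+1) * pdiff (G k) t x|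
        ≤ B * (1/2) ^ N := by
    intro N x
    have hsp := hdsum x
    have h1 := Summable.sum_add_tsum_nat_add (f := fun k => (1/2:ℝ) ^ (k+1) * pdiff (G k) t x) N hsp
    have h2 : pdiff (Tsum G) t x - ∑ k ∈ Finset.range N, (1/2:ℝ) ^ (k+1) * pdiff (G k) t x
        = ∑' k, (1/2:ℝ) ^ ((k+N)+1) * pdiff (G (k+N)) t x := by
      rw [hdeq x, ← h1]; ring
    rw [h2]
    have hnorm : ∀ k, ‖(1/2:ℝ) ^ ((k+N)+1) * pdiff (G (k+N)) t x‖
        ≤ (1/2:ℝ) ^ k * ((1/2)^(N+1) * B) := by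
      intro k
      rw [Real.norm_eq_abs, abs_mul, abs_of_nonneg (by positivity : (0:ℝ) ≤ (1/2:ℝ) ^ ((k+N)+1))]
      calc (1/2:ℝ) ^ ((k+N)+1) * |pdiff (G (k+N)) t x|
          ≤ (1/2:ℝ) ^ ((k+N)+1) * B :=
            mul_le_mul_of_nonneg_left (hterm _ x) (by positivity)
        _ = (1/2:ℝ) ^ k * ((1/2)^(N+1) * B) := by ring
    have hgs : Summable (fun k => (1/2:ℝ) ^ k * ((1/2)^(N+1) * B)) :=
      summable_geometric_two.mul_right _
    calc |∑' k, (1/2:ℝ) ^ ((k+N)+1) * pdiff (G (k+N)) t x|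
        ≤ ∑' k, (1/2:ℝ) ^ k * ((1/2)^(N+1) * B) := by
          refine (norm_tsum_le_tsum_norm ?_).trans (Summable.tsum_le_tsum hnorm ?_ hgs)
          · exact Summable.of_nonneg_of_le (fun k => norm_nonneg _) hnorm hgs
          · exact Summable.of_nonneg_of_le (fun k => norm_nonneg _) hnorm hgs
      _ = 2 * ((1/2)^(N+1) * B) := by rw [tsum_mul_right, tsum_geometric_two]
      _ = B * (1/2) ^ N := by ring
  -- main estimate for each N
  have hmain : ∀ N : ℕ, Q t (pdiff (Tsum G) t) ≤ B * (1/2) ^ N := by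
    intro N
    set SN : X → ℝ := fun x => ∑ k ∈ Finset.range N, (1/2:ℝ) ^ (k+1) * pdiff (G k) t x
      with hSN
    have hsplit : pdiff (Tsum G) t = SN + (pdiff (Tsum G) t - SN) := by
      funext x; simp
    have hQSN : Q t SN ≤ 0 := by
      have hSNeq : SN = ∑ k ∈ Finset.range N, ((1/2:ℝ) ^ (k+1) • pdiff (G k) t) := by
        funext x
        rw [hSN]
        simp [Finset.sum_apply]
      rw [hSNeq]
      apply Q_finsum hQ
      intro k _
      rw [(hQ t).2.2 _ _ (by positivity)]
      have := hG1 k t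
      nlinarith [pow_pos (by norm_num : (0:ℝ) < 1/2) (k+1)]
    calc Q t (pdiff (Tsum G) t) = Q t (SN + (pdiff (Tsum G) t - SN)) := by rw [← hsplit]
      _ ≤ Q t SN + Q t (pdiff (Tsum G) t - SN) := (hQ t).2.1 _ _
      _ ≤ 0 + Q t (pdiff (Tsum G) t - SN) := by linarith
      _ ≤ 0 + B * (1/2) ^ N := by
          gcongr
          refine ((hQ t).1 _).trans (ciSup_le fun x => ?_)
          exact (abs_le.mp (htail N x)).2
      _ = B * (1/2) ^ N := by ring
  have htend : Tendsto (fun N : ℕ => B * (1/2:ℝ) ^ N) atTop (nhds 0) := by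
    have := tendsto_pow_atTop_nhds_zero_of_lt_one (by norm_num : (0:ℝ) ≤ 1/2)
      (by norm_num : (1/2:ℝ) < 1)
    simpa using this.const_mul B
  exact ge_of_tendsto' htend hmain

end Combine
end Levy6
theorem levy_zero_one_law {X : Type*} [Fintype X] [Nonempty X]
    (Q : List X → (X → ℝ) → ℝ) (hQ : Coherent Q)
    (f : (ℕ → X) → ℝ) (hf : ∃ C : ℝ, ∀ ω, |f ω| ≤ C)
    (α : ℝ) (hα : 1 < α) :
    ∃ T : List X → ℝ, IsTestSupermart Q T ∧ (∀ s, 0 < T s) ∧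
      (∀ (s : List X) (x : X), pmul T s x ≤ α) ∧
      ∀ ω : ℕ → X,
        Filter.liminf (fun n => EV Q (fun ω' => ((f ω' : ℝ) : EReal)) (pref ω n))
            Filter.atTop < (f ω : EReal) →
        Filter.Tendsto (fun n => T (pref ω n)) Filter.atTop Filter.atTop := by
  classical
  obtain ⟨Cb, hCb⟩ := hf
  set C0 : ℝ := Cb + 1 with hC0def
  have hCb0 : 0 ≤ Cb := le_trans (abs_nonneg _) (hCb (fun _ => Classical.arbitrary X))
  have hC0 : 0 < C0 := by simp only [hC0def]; linarith
  have hfC : ∀ ω, |f ω| ≤ C0 := fun ω => (hCb ω).trans (by simp only [hC0def]; linarith)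
  set l : ℝ := min (α - 1) 1 / (4 * C0) with hldef
  have hm0 : 0 < min (α - 1) 1 := lt_min (by linarith) one_pos
  have hl0 : 0 < l := div_pos hm0 (by linarith)
  have hlCeq : l * C0 = min (α - 1) 1 / 4 := by
    rw [hldef]; field_simp
  have hlC : l * C0 ≤ 1/4 := by
    rw [hlCeq]; have := min_le_right (α - 1) 1; linarith
  have h4 : 1 + 4 * l * C0 ≤ α := by
    have h1 : 4 * l * C0 = min (α - 1) 1 := by rw [mul_assoc, hlCeq]; ring
    have := min_le_left (α - 1) 1
    linarith
  set e : ℕ ≃ ℚ × ℚ := (Denumerable.eqv (ℚ × ℚ)).symm with hedef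
  set G : ℕ → List X → ℝ := fun k =>
    if ((e k).1 : ℝ) < ((e k).2 : ℝ) then
      TT Q f C0 ((e k).1 : ℝ) ((((e k).1 : ℝ) + ((e k).2 : ℝ)) / 2) l
    else fun _ => 1 with hGdef
  have hone : IsSupermart Q (fun _ : List X => (1:ℝ)) := by
    intro s
    have hd : pdiff (fun _ : List X => (1:ℝ)) s = 0 := by funext x; simp [pdiff]
    rw [hd, Q_zero hQ]
  have habp : ∀ k, ((e k).1 : ℝ) < ((e k).2 : ℝ) →
      ((e k).1 : ℝ) < (((e k).1 : ℝ) + ((e k).2 : ℝ)) / 2 := by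
    intro k h; linarith
  have hG1 : ∀ k, IsSupermart Q (G k) := by
    intro k
    simp only [hGdef]
    split_ifs with h
    · exact TT_supermart hQ hfC hC0 (habp k h) hl0 hlC
    · exact hone
  have hG2 : ∀ k t, 0 < G k t := by
    intro k t
    simp only [hGdef]
    split_ifs with h
    · exact TT_pos hQ hfC hC0 (habp k h) hl0 hlC t
    · exact one_pos
  have hG3 : ∀ k, G k [] = 1 := by
    intro k
    simp only [hGdef]
    split_ifs with h
    · exact TT_nil
    · rfl
  have hG4 : ∀ k t x, G k (t ++ [x]) ≤ α * G k t := by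
    intro k t x
    simp only [hGdef]
    split_ifs with h
    · refine (TT_mult hQ hfC hC0 (habp k h) hl0 hlC t x).trans ?_
      exact mul_le_mul_of_nonneg_right h4
        (TT_pos hQ hfC hC0 (habp k h) hl0 hlC t).le
    · simpa using hα.le
  refine ⟨Tsum G, ⟨Tsum_supermart hα hQ hG1 hG2 hG3 hG4,
      fun s => (Tsum_pos hα hG2 hG3 hG4 s).le, Tsum_nil hα hG2 hG3 hG4⟩,
      fun s => Tsum_pos hα hG2 hG3 hG4 s, fun s x => ?_, fun ω hlt => ?_⟩
  · show Tsum G (s ++ [x]) / Tsum G s ≤ α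
    rw [div_le_iff₀ (Tsum_pos hα hG2 hG3 hG4 s)]
    exact Tsum_mult hα hG2 hG3 hG4 s x
  · -- divergence
    obtain ⟨r, hr1, hr2⟩ := EReal.exists_between_coe_real hlt
    have hr2' : r < f ω := by exact_mod_cast hr2
    obtain ⟨q1, hq11, hq12⟩ := exists_rat_btwn hr2'
    obtain ⟨q2, hq21, hq22⟩ := exists_rat_btwn hq12
    have hlim' : liminf (fun n => EV Q (fE f) (pref ω n)) atTop < (((q1:ℝ) : ℝ) : EReal) :=
      lt_of_lt_of_le hr1 (by exact_mod_cast hq11.le)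
    have hfreq : ∃ᶠ n in atTop, EV Q (fE f) (pref ω n) < (((q1:ℝ) : ℝ) : EReal) :=
      frequently_lt_of_liminf_lt (by isBoundedDefault) hlim'
    set k : ℕ := e.symm (q1, q2) with hkdef
    have hek : e k = (q1, q2) := by rw [hkdef]; exact e.apply_symm_apply _
    have hq12' : ((q1:ℝ) : ℝ) < ((q2:ℝ) : ℝ) := by exact_mod_cast hq21
    have hGk : G k = TT Q f C0 ((q1:ℝ)) (((q1:ℝ) + (q2:ℝ)) / 2) l := by
      simp only [hGdef, hek]
      rw [if_pos hq12']
    have hbω : ((q1:ℝ) + (q2:ℝ)) / 2 < f ω := by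
      have h1 : ((q1:ℝ)) < (q2:ℝ) := hq12'
      have h2 : ((q2:ℝ)) < f ω := hq22
      linarith
    have habp' : ((q1:ℝ)) < ((q1:ℝ) + (q2:ℝ)) / 2 := by linarith [hq12']
    have htd := TT_diverge hQ hfC hC0 habp' hl0 hlC hbω hfreq
    have hlow : ∀ n, (1/2:ℝ) ^ (k+1) * G k (pref ω n) ≤ Tsum G (pref ω n) :=
      fun n => le_Tsum hα hG2 hG3 hG4 k (pref ω n)
    have hmid : Tendsto (fun n => (1/2:ℝ) ^ (k+1) * G k (pref ω n)) atTop atTop := by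
      rw [hGk]
      exact htd.const_mul_atTop (by positivity)
    exact tendsto_atTop_mono hlow hmid
end

section
/- (Continuity with respect to lower cuts) For any extended real variable f on the path space Ω, defining f_A(ω) := max{f(ω), A} for each real A, one has lim_{A → −∞} E_V(f_A) = E_V(f). -/
open Filter

theorem continuity_lower_cuts {X : Type*} [Fintype X] [Nonempty X]
    (Q : List X → (X → ℝ) → ℝ) (hQ : Coherent Q)
    (f : (ℕ → X) → EReal) :
    Filter.Tendsto (fun A : ℝ => EV Q (fun ω => max (f ω) (A : EReal)) [])
      Filter.atBot (nhds (EV Q f [])) := by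
  have hmono : ∀ A : ℝ, EV Q f [] ≤ EV Q (fun ω => max (f ω) (A : EReal)) [] := by
    intro A
    apply sInf_le_sInf
    rintro y ⟨M, hs, hb, hl, hy⟩
    exact ⟨M, hs, hb, fun ω hω => le_trans (le_max_left _ _) (hl ω hω), hy⟩
  rw [tendsto_order]
  constructor
  · intro b hb
    exact Filter.Eventually.of_forall fun A => lt_of_lt_of_le hb (hmono A)
  · intro b hb
    obtain ⟨y, ⟨M, hs, hbd, hl, hy⟩, hyb⟩ := sInf_lt_iff.mp hb
    obtain ⟨C, hC⟩ := hbd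
    filter_upwards [Filter.eventually_le_atBot C] with A hA
    have : EV Q (fun ω => max (f ω) (A : EReal)) [] ≤ y := by
      apply sInf_le
      refine ⟨M, hs, ⟨C, hC⟩, fun ω hω => ?_, hy⟩
      refine max_le (hl ω hω) ?_
      have hCl : (C : EReal) ≤ Filter.liminf (fun n => ((M (pref ω n) : ℝ) : EReal)) Filter.atTop := by
        refine Filter.le_liminf_of_le (by isBoundedDefault) ?_
        exact Filter.Eventually.of_forall fun n => EReal.coe_le_coe_iff.mpr (hC _)
      exact le_trans (EReal.coe_le_coe_iff.mpr hA) hCl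
    exact lt_of_le_of_lt this hyb
end

section
/- If there exists a bounded-below supermartingale M with M(□) ≤ α and liminf M ≥ f on all paths, then there is a real A* such that E_V(max{f, A}) ≤ α for all A ≤ A*. -/
open Filter

theorem EV_lower_cut_le {X : Type*} [Fintype X] [Nonempty X]
    (Q : List X → (X → ℝ) → ℝ) (hQ : Coherent Q)
    (f : (ℕ → X) → EReal) (α : ℝ)
    (M : List X → ℝ) (hM : IsSupermart Q M) (hMb : BddBelowProc M)
    (hMα : M [] ≤ α)
    (hdom : ∀ ω : ℕ → X,
      f ω ≤ Filter.liminf (fun n => ((M (pref ω n) : ℝ) : EReal)) Filter.atTop) :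
    ∃ Astar : ℝ, ∀ A : ℝ, A ≤ Astar →
      EV Q (fun ω => max (f ω) (A : EReal)) [] ≤ (α : EReal) := by
  obtain ⟨C, hC⟩ := hMb
  refine ⟨C, fun A hA => ?_⟩
  have hmem : ((M [] : ℝ) : EReal) ∈ { y : EReal | ∃ N : List X → ℝ, IsSupermart Q N ∧
      BddBelowProc N ∧
      (∀ ω : ℕ → X, pref ω (List.length ([] : List X)) = [] →
        (fun ω => max (f ω) (A : EReal)) ω ≤
          Filter.liminf (fun n => ((N (pref ω n) : ℝ) : EReal)) Filter.atTop) ∧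
      y = ((N [] : ℝ) : EReal) } := by
    refine ⟨M, hM, ⟨C, hC⟩, fun ω _ => ?_, rfl⟩
    refine max_le (hdom ω) ?_
    exact Filter.le_liminf_of_le (f := Filter.atTop)
      (u := fun n => ((M (pref ω n) : ℝ) : EReal))
      (by isBoundedDefault)
      (Filter.Eventually.of_forall fun n =>
        show (A : EReal) ≤ ((M (pref ω n) : ℝ) : EReal) by
          exact_mod_cast (hA.trans (hC (pref ω n))))
  calc EV Q (fun ω => max (f ω) (A : EReal)) [] ≤ ((M [] : ℝ) : EReal) := sInf_le hmem
    _ ≤ (α : EReal) := by exact_mod_cast hMα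
end
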